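/- Let r be irrational and let Q(ω) be, for each ω ∈ [0,1), a square 0-1 matrix (of fixed size b) with at least one 1 in every row and column, such that Q(ω) has all entries equal to 1 whenever ω lies in a fixed nonempty open interval I ⊆ [0,1). Then there exists M such that for every ω the product Q(ω)·Q(ω+r)·…·Q(ω+(M−1)r) (addition mod 1) has all entries strictly positive. -/

import Mathlib

open Set Matrix

section MatrixLemmas

variable {b : ℕ}

lemma myprod_nonneg (L : List (Matrix (Fin b) (Fin b) ℝ))
    (h0 : ∀ A ∈ L, ∀ i j, 0 ≤ A i j) : ∀ i j, 0 ≤ L.prod i j := by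
  induction L with
  | nil =>
    intro i j
    by_cases h : i = j <;> simp [Matrix.one_apply, h]
  | cons A L ih =>
    intro i j
    rw [List.prod_cons, Matrix.mul_apply]
    exact Finset.sum_nonneg fun k _ => mul_nonneg (h0 A (List.mem_cons_self) _ _)
      (ih (fun B hB => h0 B (List.mem_cons_of_mem _ hB)) _ _)

lemma myprod_rowpos (L : List (Matrix (Fin b) (Fin b) ℝ))
    (h0 : ∀ A ∈ L, ∀ i j, 0 ≤ A i j)
    (hrow : ∀ A ∈ L, ∀ i, ∃ j, 0 < A i j) : ∀ i, ∃ j, 0 < L.prod i j := by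
  induction L with
  | nil => exact fun i => ⟨i, by simp⟩
  | cons A L ih =>
    intro i
    obtain ⟨k, hk⟩ := hrow A (List.mem_cons_self) i
    obtain ⟨j, hj⟩ := ih (fun B hB => h0 B (List.mem_cons_of_mem _ hB))
      (fun B hB => hrow B (List.mem_cons_of_mem _ hB)) k
    refine ⟨j, ?_⟩
    rw [List.prod_cons, Matrix.mul_apply]
    have hle : A i k * L.prod k j ≤ ∑ m, A i m * L.prod m j :=
      Finset.single_le_sum (f := fun m => A i m * L.prod m j) (fun m _ => mul_nonneg (h0 A (List.mem_cons_self) _ _)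
        (myprod_nonneg L (fun B hB => h0 B (List.mem_cons_of_mem _ hB)) _ _)) (Finset.mem_univ k)
    exact lt_of_lt_of_le (mul_pos hk hj) hle

lemma myprod_colpos (L : List (Matrix (Fin b) (Fin b) ℝ))
    (h0 : ∀ A ∈ L, ∀ i j, 0 ≤ A i j)
    (hcol : ∀ A ∈ L, ∀ j, ∃ i, 0 < A i j) : ∀ j, ∃ i, 0 < L.prod i j := by
  induction L with
  | nil => exact fun j => ⟨j, by simp⟩
  | cons A L ih =>
    intro j
    obtain ⟨m, hm⟩ := ih (fun B hB => h0 B (List.mem_cons_of_mem _ hB))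
      (fun B hB => hcol B (List.mem_cons_of_mem _ hB)) j
    obtain ⟨i, hi⟩ := hcol A (List.mem_cons_self) m
    refine ⟨i, ?_⟩
    rw [List.prod_cons, Matrix.mul_apply]
    have hle : A i m * L.prod m j ≤ ∑ k, A i k * L.prod k j :=
      Finset.single_le_sum (f := fun k => A i k * L.prod k j) (fun k _ => mul_nonneg (h0 A (List.mem_cons_self) _ _)
        (myprod_nonneg L (fun B hB => h0 B (List.mem_cons_of_mem _ hB)) _ _)) (Finset.mem_univ m)
    exact lt_of_lt_of_le (mul_pos hi hm) hle

lemma pos_mul_of_rowpos (A B : Matrix (Fin b) (Fin b) ℝ)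
    (h0 : ∀ i j, 0 ≤ A i j) (hrow : ∀ i, ∃ j, 0 < A i j)
    (hB : ∀ i j, 0 < B i j) : ∀ i j, 0 < (A * B) i j := by
  intro i j
  obtain ⟨k, hk⟩ := hrow i
  rw [Matrix.mul_apply]
  have hle : A i k * B k j ≤ ∑ m, A i m * B m j :=
    Finset.single_le_sum (f := fun m => A i m * B m j) (fun m _ => mul_nonneg (h0 _ _) (hB _ _).le) (Finset.mem_univ k)
  exact lt_of_lt_of_le (mul_pos hk (hB _ _)) hle

lemma pos_mul_of_colpos (A B : Matrix (Fin b) (Fin b) ℝ)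
    (hA : ∀ i j, 0 < A i j) (h0 : ∀ i j, 0 ≤ B i j)
    (hcol : ∀ j, ∃ i, 0 < B i j) : ∀ i j, 0 < (A * B) i j := by
  intro i j
  obtain ⟨k, hk⟩ := hcol j
  rw [Matrix.mul_apply]
  have hle : A i k * B k j ≤ ∑ m, A i m * B m j :=
    Finset.single_le_sum (f := fun m => A i m * B m j) (fun m _ => mul_nonneg (hA _ _).le (h0 _ _)) (Finset.mem_univ k)
  exact lt_of_lt_of_le (mul_pos (hA _ _) hk) hle

lemma list_prod_pos (L : List (Matrix (Fin b) (Fin b) ℝ))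
    (h0 : ∀ A ∈ L, ∀ i j, 0 ≤ A i j)
    (hrow : ∀ A ∈ L, ∀ i, ∃ j, 0 < A i j)
    (hcol : ∀ A ∈ L, ∀ j, ∃ i, 0 < A i j)
    (B : Matrix (Fin b) (Fin b) ℝ) (hBL : B ∈ L) (hB : ∀ i j, 0 < B i j) :
    ∀ i j, 0 < L.prod i j := by
  obtain ⟨s, t, rfl⟩ := List.append_of_mem hBL
  have hmem_s : ∀ A ∈ s, A ∈ s ++ B :: t := fun A hA => List.mem_append_left _ hA
  have hmem_t : ∀ A ∈ t, A ∈ s ++ B :: t :=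
    fun A hA => List.mem_append_right _ (List.mem_cons_of_mem _ hA)
  rw [List.prod_append, List.prod_cons]
  have hBt : ∀ i j, 0 < (B * t.prod) i j :=
    pos_mul_of_colpos B t.prod hB
      (myprod_nonneg t (fun A hA => h0 A (hmem_t A hA)))
      (myprod_colpos t (fun A hA => h0 A (hmem_t A hA)) (fun A hA => hcol A (hmem_t A hA)))
  exact pos_mul_of_rowpos s.prod (B * t.prod)
    (myprod_nonneg s (fun A hA => h0 A (hmem_s A hA)))
    (myprod_rowpos s (fun A hA => h0 A (hmem_s A hA)) (fun A hA => hrow A (hmem_s A hA)))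
    hBt

end MatrixLemmas

lemma dense_nsmul_circle (r : ℝ) (hr : Irrational r) :
    DenseRange (fun n : ℕ => n • (↑r : AddCircle (1:ℝ))) := by
  haveI : Fact ((0:ℝ) < 1) := ⟨one_pos⟩
  rw [← denseRange_zsmul_iff_nsmul]
  set S : AddSubgroup ℝ := AddSubgroup.zmultiples 1 ⊔ AddSubgroup.zmultiples r with hSdef
  have hS : Dense (S : Set ℝ) := by
    rcases AddSubgroup.dense_or_cyclic S with h | ⟨a, ha⟩
    · exact h
    · exfalso
      have h1 : (1:ℝ) ∈ S := AddSubgroup.mem_sup_left (AddSubgroup.mem_zmultiples 1)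
      have h2 : r ∈ S := AddSubgroup.mem_sup_right (AddSubgroup.mem_zmultiples r)
      rw [ha, AddSubgroup.mem_closure_singleton] at h1 h2
      obtain ⟨n, hn⟩ := h1
      obtain ⟨m, hm⟩ := h2
      have hn' : (n:ℝ) * a = 1 := by rw [← hn]; simp [zsmul_eq_mul]
      have hm' : (m:ℝ) * a = r := by rw [← hm]; simp [zsmul_eq_mul]
      have hn0 : (n:ℝ) ≠ 0 := by
        intro h
        rw [h, zero_mul] at hn'
        exact one_ne_zero hn'.symm
      refine hr ⟨(m : ℚ) / (n : ℚ), ?_⟩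
      push_cast
      rw [div_eq_iff hn0]
      linear_combination (n:ℝ) * hm' - (m:ℝ) * hn'
  -- push density to the circle
  intro y
  have hy : y ∈ closure (((↑) : ℝ → AddCircle (1:ℝ)) '' (S : Set ℝ)) := by
    obtain ⟨x, rfl⟩ : ∃ x : ℝ, (x : AddCircle (1:ℝ)) = y := Quotient.exists_rep y
    have := image_closure_subset_closure_image (s := (S : Set ℝ))
      (AddCircle.continuous_mk' (1:ℝ))
    rw [hS.closure_eq] at this
    exact this ⟨x, mem_univ x, rfl⟩
  refine closure_mono ?_ hy
  rintro z ⟨x, hx, rfl⟩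
  rw [SetLike.mem_coe, hSdef, AddSubgroup.mem_sup] at hx
  obtain ⟨u, hu, v, hv, rfl⟩ := hx
  obtain ⟨k, rfl⟩ := AddSubgroup.mem_zmultiples_iff.1 hu
  obtain ⟨m, rfl⟩ := AddSubgroup.mem_zmultiples_iff.1 hv
  refine ⟨m, ?_⟩
  have h1 : ((k • (1:ℝ) : ℝ) : AddCircle (1:ℝ)) = 0 := by
    rw [AddCircle.coe_zsmul, AddCircle.coe_period, smul_zero]
  rw [AddCircle.coe_add, h1, zero_add, AddCircle.coe_zsmul]

lemma coe_mem_image_Ioo_iff {c d : ℝ} (hc : 0 ≤ c) (hd : d ≤ 1) (z : ℝ) :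
    (↑z : AddCircle (1:ℝ)) ∈ (((↑) : ℝ → AddCircle (1:ℝ)) '' Set.Ioo c d) ↔
      Int.fract z ∈ Set.Ioo c d := by
  constructor
  · rintro ⟨y, hy, hyz⟩
    have h0 : (↑(z - y) : AddCircle (1:ℝ)) = 0 := by
      rw [AddCircle.coe_sub, hyz, sub_self]
    rw [AddCircle.coe_eq_zero_iff] at h0
    obtain ⟨k, hk⟩ := h0
    have hk' : (k : ℝ) = z - y := by simpa [zsmul_eq_mul] using hk
    have hz : z = y + k := by linarith
    have : Int.fract z = y := by
      rw [hz, Int.fract_add_intCast,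
        Int.fract_eq_self.2 ⟨hc.trans hy.1.le, hy.2.trans_le hd⟩]
    rwa [this]
  · intro h
    refine ⟨Int.fract z, h, ?_⟩
    have h0 : ((⌊z⌋ : ℝ) : AddCircle (1:ℝ)) = 0 :=
      (AddCircle.coe_eq_zero_iff (1:ℝ)).2 ⟨⌊z⌋, by simp⟩
    rw [Int.fract, AddCircle.coe_sub, h0, sub_zero]

lemma exists_fract_mem (r : ℝ) (hr : Irrational r) {c d : ℝ}
    (hc : 0 ≤ c) (hcd : c < d) (hd : d ≤ 1) (x : ℝ) :
    ∃ n : ℕ, Int.fract (x + n * r) ∈ Set.Ioo c d := by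
  have hdr := dense_nsmul_circle r hr
  have hV : IsOpen (((↑) : ℝ → AddCircle (1:ℝ)) '' Set.Ioo c d) :=
    QuotientAddGroup.isOpenMap_coe _ isOpen_Ioo
  have hne : (((↑) : ℝ → AddCircle (1:ℝ)) '' Set.Ioo c d).Nonempty :=
    ⟨_, ⟨(c + d) / 2, ⟨by linarith, by linarith⟩, rfl⟩⟩
  have htr : DenseRange (fun n : ℕ => (↑x : AddCircle (1:ℝ)) + n • (↑r : AddCircle (1:ℝ))) :=
    (Homeomorph.addLeft (↑x : AddCircle (1:ℝ))).surjective.denseRange.comp hdr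
      (Homeomorph.addLeft (↑x : AddCircle (1:ℝ))).continuous
  obtain ⟨n, hn⟩ := htr.exists_mem_open hV hne
  refine ⟨n, ?_⟩
  rw [← coe_mem_image_Ioo_iff hc hd]
  have : ((x + n * r : ℝ) : AddCircle (1:ℝ)) =
      (↑x : AddCircle (1:ℝ)) + n • (↑r : AddCircle (1:ℝ)) := by
    rw [AddCircle.coe_add, ← AddCircle.coe_nsmul, nsmul_eq_mul]
  rw [this]
  exact hn

theorem stmt_11 (r : ℝ) (hr : Irrational r) (b : ℕ)
    (Q : ℝ → Matrix (Fin b) (Fin b) ℝ)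
    (h01 : ∀ ω i j, Q ω i j = 0 ∨ Q ω i j = 1)
    (hrow : ∀ ω i, ∃ j, Q ω i j = 1)
    (hcol : ∀ ω j, ∃ i, Q ω i j = 1)
    (c d : ℝ) (hc : 0 ≤ c) (hcd : c < d) (hd : d ≤ 1)
    (hI : ∀ ω : ℝ, Int.fract ω ∈ Set.Ioo c d → ∀ i j, Q ω i j = 1) :
    ∃ M : ℕ, 1 ≤ M ∧ ∀ ω : ℝ, ∀ i j,
      0 < ((List.range M).map (fun k : ℕ => Q (ω + k * r))).prod i j := by
  -- open covering of [0,1]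
  set U : ℕ → Set ℝ :=
    fun n => (fun x : ℝ => ((x + n * r : ℝ) : AddCircle (1:ℝ))) ⁻¹'
      (((↑) : ℝ → AddCircle (1:ℝ)) '' Set.Ioo c d) with hU
  have hVopen : IsOpen (((↑) : ℝ → AddCircle (1:ℝ)) '' Set.Ioo c d) :=
    QuotientAddGroup.isOpenMap_coe _ isOpen_Ioo
  have hUopen : ∀ n, IsOpen (U n) := fun n =>
    hVopen.preimage ((AddCircle.continuous_mk' (1:ℝ)).comp (by continuity))
  have hUmem : ∀ n (x : ℝ), x ∈ U n ↔ Int.fract (x + n * r) ∈ Set.Ioo c d := by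
    intro n x
    rw [hU]
    exact coe_mem_image_Ioo_iff hc hd _
  have hcover : Set.Icc (0:ℝ) 1 ⊆ ⋃ n : ℕ, U n := by
    intro x _
    obtain ⟨n, hn⟩ := exists_fract_mem r hr hc hcd hd x
    exact Set.mem_iUnion.2 ⟨n, (hUmem n x).2 hn⟩
  obtain ⟨t, ht⟩ := isCompact_Icc.elim_finite_subcover U hUopen hcover
  refine ⟨t.sup id + 1, le_add_self, ?_⟩
  intro ω i j
  -- find k < M with fract (ω + k r) ∈ Ioo c d
  have hfr : Int.fract ω ∈ Set.Icc (0:ℝ) 1 := ⟨Int.fract_nonneg ω, (Int.fract_lt_one ω).le⟩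
  obtain ⟨n, hnmem⟩ := Set.mem_iUnion₂.1 (ht hfr)
  obtain ⟨hnt, hnU⟩ := hnmem
  have hkey : Int.fract (ω + n * r) ∈ Set.Ioo c d := by
    have := (hUmem n (Int.fract ω)).1 hnU
    have heq : Int.fract (Int.fract ω + n * r) = Int.fract (ω + n * r) := by
      have h2 : Int.fract ω + n * r = ω + n * r - ⌊ω⌋ := by rw [Int.fract]; ring
      rw [h2, Int.fract_sub_intCast]
    rwa [heq] at this
  have hkM : n < t.sup id + 1 := Nat.lt_succ_of_le (Finset.le_sup (f := id) hnt)
  -- matrix part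
  set L := (List.range (t.sup id + 1)).map (fun k : ℕ => Q (ω + k * r)) with hL
  have hform : ∀ A ∈ L, ∃ k : ℕ, A = Q (ω + k * r) := by
    intro A hA
    rw [hL, List.mem_map] at hA
    obtain ⟨k, _, rfl⟩ := hA
    exact ⟨k, rfl⟩
  refine list_prod_pos L ?_ ?_ ?_ (Q (ω + n * r)) ?_ ?_ i j
  · intro A hA i' j'
    obtain ⟨k, rfl⟩ := hform A hA
    rcases h01 (ω + k * r) i' j' with h | h <;> simp [h]
  · intro A hA i'
    obtain ⟨k, rfl⟩ := hform A hA
    obtain ⟨j', hj'⟩ := hrow (ω + k * r) i'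
    exact ⟨j', by rw [hj']; norm_num⟩
  · intro A hA j'
    obtain ⟨k, rfl⟩ := hform A hA
    obtain ⟨i', hi'⟩ := hcol (ω + k * r) j'
    exact ⟨i', by rw [hi']; norm_num⟩
  · rw [hL, List.mem_map]
    exact ⟨n, List.mem_range.2 hkM, rfl⟩
  · intro i' j'
    rw [hI (ω + n * r) hkey i' j']
    norm_num
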